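/- Let C_1, ..., C_n be a separated family of convex sets in R^d with n ≥ d+1. Then the order type of (p_1, ..., p_n) is the same for every choice of points p_i ∈ C_i (1 ≤ i ≤ n): for any two choices p_i ∈ C_i and q_i ∈ C_i and any indices 1 ≤ i_1 < ... < i_{d+1} ≤ n, the simplices with vertex sequences p_{i_1}, ..., p_{i_{d+1}} and q_{i_1}, ..., q_{i_{d+1}} have the same orientation, i.e., the determinants det(p_{i_2}−p_{i_1}, ..., p_{i_{d+1}}−p_{i_1}) and det(q_{i_2}−q_{i_1}, ..., q_{i_{d+1}}−q_{i_1}) have the same sign. -/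

import Mathlib

/-- A `(d+1)`-tuple of sets in `ℝᵈ` is separated if, for every `j` with
`1 ≤ j ≤ d` and every partition of the tuple into `j` and `d+1-j` sets, some
affine hyperplane strictly separates the union of the first group from the union
of the second group. -/
def SeparatedTuple (d : ℕ) (C : Fin (d + 1) → Set (EuclideanSpace ℝ (Fin d))) : Prop :=
  ∀ I : Finset (Fin (d + 1)), 1 ≤ I.card → I.card ≤ d →
    ∃ (f : EuclideanSpace ℝ (Fin d) →L[ℝ] ℝ) (c : ℝ), f ≠ 0 ∧
      (∀ i ∈ I, ∀ x ∈ C i, f x < c) ∧ (∀ i ∉ I, ∀ x ∈ C i, c < f x)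

/-- A family of at least `d+1` sets in `ℝᵈ` is separated if every `(d+1)`-tuple
of its members is separated. -/
def SeparatedFamily (d : ℕ) {ι : Type*} (C : ι → Set (EuclideanSpace ℝ (Fin d))) : Prop :=
  ∀ g : Fin (d + 1) → ι, Function.Injective g → SeparatedTuple d (C ∘ g)


lemma nondeg (d : ℕ) (D : Fin (d+1) → Set (EuclideanSpace ℝ (Fin d)))
    (hsep : SeparatedTuple d D) (r : Fin (d+1) → EuclideanSpace ℝ (Fin d))
    (hr : ∀ i, r i ∈ D i) :
    Matrix.det (Matrix.of fun k l : Fin d => (r l.succ - r 0) k) ≠ 0 := by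
  intro hdet
  obtain ⟨v, hv0, hmv⟩ := (Matrix.exists_mulVec_eq_zero_iff).mpr hdet
  have hmv' : ∀ k, ∑ l, (r l.succ - r 0) k * v l = 0 := fun k => congrFun hmv k
  set lam : Fin (d+1) → ℝ := Fin.cases (-(∑ l, v l)) v with hlam
  have hlam0 : lam 0 = -(∑ l, v l) := rfl
  have hlams : ∀ l : Fin d, lam l.succ = v l := fun l => rfl
  have hsum0 : ∑ i, lam i = 0 := by
    rw [Fin.sum_univ_succ]
    simp [hlam0, hlams]
  have hvec : ∑ i, lam i • r i = 0 := by
    ext k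
    show (∑ i, lam i • r i) k = 0
    have hsa : (∑ i, lam i • r i) k = ∑ i, lam i * r i k :=
      by simp
    rw [hsa, Fin.sum_univ_succ]
    simp only [hlam0, hlams]
    have hk := hmv' k
    have hsub : ∀ l : Fin d, (r l.succ - r 0) k = r l.succ k - r 0 k := fun l => rfl
    simp only [hsub] at hk
    have expand : ∑ l, (r l.succ k - r 0 k) * v l
        = (∑ l, v l * r l.succ k) - (∑ l, v l) * r 0 k := by
      rw [Finset.sum_mul, ← Finset.sum_sub_distrib]
      congr 1 with l
      ring
    rw [expand] at hk
    linarith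
  obtain ⟨l0, hl0⟩ := Function.ne_iff.mp hv0
  have hlamne : ∃ i, lam i ≠ 0 := ⟨l0.succ, by simpa [hlams] using hl0⟩
  obtain ⟨ip, _, hip⟩ := Finset.exists_pos_of_sum_zero_of_exists_nonzero lam
    (by simpa using hsum0) (by obtain ⟨i, hi⟩ := hlamne; exact ⟨i, Finset.mem_univ i, hi⟩)
  obtain ⟨im, _, him⟩ := Finset.exists_pos_of_sum_zero_of_exists_nonzero (fun i => -lam i)
    (by simpa using hsum0) (by obtain ⟨i, hi⟩ := hlamne; exact ⟨i, Finset.mem_univ i, by simpa using hi⟩)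
  have him' : lam im < 0 := by linarith
  set I : Finset (Fin (d+1)) := Finset.univ.filter (fun i => 0 < lam i) with hI
  have hIcard1 : 1 ≤ I.card := Finset.card_pos.mpr ⟨ip, by simp [hI, hip]⟩
  have hIcardd : I.card ≤ d := by
    have hne : I ≠ Finset.univ := by
      intro h
      have : im ∈ I := h ▸ Finset.mem_univ im
      simp [hI] at this
      linarith
    have := (Finset.card_lt_iff_ne_univ I).mpr hne
    simp only [Fintype.card_fin] at this
    omega
  obtain ⟨f, c, _, hflt, hfgt⟩ := hsep I hIcard1 hIcardd
  have hrel : ∑ i, lam i * f (r i) = 0 := by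
    have := congrArg f hvec
    rw [map_sum] at this
    simpa [map_smul, smul_eq_mul] using this
  have hrel2 : ∑ i, lam i * (f (r i) - c) = 0 := by
    have : ∑ i, lam i * (f (r i) - c) = (∑ i, lam i * f (r i)) - (∑ i, lam i) * c := by
      rw [Finset.sum_mul, ← Finset.sum_sub_distrib]
      congr 1 with i
      ring
    rw [this, hrel, hsum0]; ring
  rw [← Finset.sum_filter_add_sum_filter_not Finset.univ (fun i => 0 < lam i)] at hrel2
  have hA : ∑ i ∈ Finset.univ.filter (fun i => 0 < lam i), lam i * (f (r i) - c) < 0 := by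
    apply Finset.sum_neg
    · intro i hi
      simp only [Finset.mem_filter] at hi
      have h1 : f (r i) < c := hflt i (by simp [hI, hi.2]) (r i) (hr i)
      exact mul_neg_of_pos_of_neg hi.2 (by linarith)
    · exact ⟨ip, by simp [hip]⟩
  have hB : ∑ i ∈ Finset.univ.filter (fun i => ¬ 0 < lam i), lam i * (f (r i) - c) ≤ 0 := by
    apply Finset.sum_nonpos
    intro i hi
    simp only [Finset.mem_filter] at hi
    have h1 : c < f (r i) := hfgt i (by simp [hI, hi.2]) (r i) (hr i)
    exact mul_nonpos_of_nonpos_of_nonneg (by simpa using hi.2) (by linarith)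
  linarith

/-- If `C 0, …, C (n-1)` is a separated family of convex sets in `ℝᵈ` (with
`n ≥ d+1`), then all transversal point sequences `p i ∈ C i` have the same order
type: for any indices `i 0 < … < i d` and any choices `p i ∈ C i`, `q i ∈ C i`,
the determinants of the matrices with columns `p (i k) - p (i 0)` resp.
`q (i k) - q (i 0)` (`k = 1, …, d`) have the same sign. -/
theorem separated_family_constant_order_type (d n : ℕ) (hn : d + 1 ≤ n)
    (C : Fin n → Set (EuclideanSpace ℝ (Fin d))) (hconv : ∀ i, Convex ℝ (C i))
    (hsep : SeparatedFamily d C)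
    (p q : Fin n → EuclideanSpace ℝ (Fin d))
    (hp : ∀ i, p i ∈ C i) (hq : ∀ i, q i ∈ C i)
    (ind : Fin (d + 1) → Fin n) (hind : StrictMono ind) :
    Real.sign (Matrix.det (Matrix.of fun k l : Fin d =>
        (p (ind l.succ) - p (ind 0)) k)) =
      Real.sign (Matrix.det (Matrix.of fun k l : Fin d =>
        (q (ind l.succ) - q (ind 0)) k)) := by
  have hsepT : SeparatedTuple d (C ∘ ind) := hsep ind hind.injective
  set F : ℝ → ℝ := fun t => Matrix.det (Matrix.of fun k l : Fin d =>
      (1 - t) * (p (ind l.succ) - p (ind 0)) k + t * (q (ind l.succ) - q (ind 0)) k)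
    with hF
  have hF0 : F 0 = Matrix.det (Matrix.of fun k l : Fin d =>
      (p (ind l.succ) - p (ind 0)) k) := by
    simp [hF]
  have hF1 : F 1 = Matrix.det (Matrix.of fun k l : Fin d =>
      (q (ind l.succ) - q (ind 0)) k) := by
    simp [hF]
  have hFne : ∀ t ∈ Set.Icc (0:ℝ) 1, F t ≠ 0 := by
    intro t ht
    set r : Fin (d + 1) → EuclideanSpace ℝ (Fin d) :=
      fun i => (1 - t) • p (ind i) + t • q (ind i) with hr
    have hrC : ∀ i, r i ∈ (C ∘ ind) i := fun i =>
      hconv (ind i) (hp (ind i)) (hq (ind i)) (by linarith [ht.2]) ht.1 (by ring)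
    have hFt : F t = Matrix.det (Matrix.of fun k l : Fin d => (r l.succ - r 0) k) := by
      show Matrix.det _ = _
      congr 1
      funext k l
      show (1 - t) * (p (ind l.succ) - p (ind 0)) k + t * (q (ind l.succ) - q (ind 0)) k
        = (r l.succ - r 0) k
      have e1 : (r l.succ - r 0) k = r l.succ k - r 0 k := rfl
      have e2 : ∀ i, r i k = (1 - t) * p (ind i) k + t * q (ind i) k := fun i => rfl
      have e3 : ∀ i j : Fin n, (p i - p j) k = p i k - p j k := fun i j => rfl
      have e4 : ∀ i j : Fin n, (q i - q j) k = q i k - q j k := fun i j => rfl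
      rw [e1, e2, e2, e3, e4]
      ring
    rw [hFt]
    exact nondeg d (C ∘ ind) hsepT r hrC
  have hcont : Continuous F := by
    apply Continuous.matrix_det
    apply continuous_matrix
    intro k l
    simp only [Matrix.of_apply]
    fun_prop
  have h0 := hFne 0 (by norm_num)
  have h1 := hFne 1 (by norm_num)
  have hsame : Real.sign (F 0) = Real.sign (F 1) := by
    rcases lt_trichotomy (F 0) 0 with hs0 | hs0 | hs0
    · have hs1 : F 1 < 0 := by
        by_contra h
        push_neg at h
        have h1' : 0 < F 1 := lt_of_le_of_ne h (Ne.symm h1)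
        obtain ⟨t, ht, htz⟩ := intermediate_value_Icc (by norm_num : (0:ℝ) ≤ 1)
          hcont.continuousOn (Set.mem_Icc.mpr ⟨hs0.le, h1'.le⟩)
        exact hFne t ht htz
      rw [Real.sign_of_neg hs0, Real.sign_of_neg hs1]
    · exact absurd hs0 h0
    · have hs1 : 0 < F 1 := by
        by_contra h
        push_neg at h
        have h1' : F 1 < 0 := lt_of_le_of_ne h h1
        obtain ⟨t, ht, htz⟩ := intermediate_value_Icc' (by norm_num : (0:ℝ) ≤ 1)
          hcont.continuousOn (Set.mem_Icc.mpr ⟨h1'.le, hs0.le⟩)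
        exact hFne t ht htz
      rw [Real.sign_of_pos hs0, Real.sign_of_pos hs1]
  rw [← hF0, ← hF1, hsame]
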